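/- The function θ₂(t) = 6428310336000(19 + 3t)e^t − 87648575175 + 12063818025t + 11024679960t² + 1860693660t³ + 134647380t⁴ + 3367980t⁵ − 115920t⁶ − 9684t⁷ − 234t⁸ − 2t⁹ is positive and increasing on (0,∞). -/

import Mathlib

noncomputable def θ₂ (t : ℝ) : ℝ :=
  6428310336000*(19 + 3*t)*Real.exp t - 87648575175 + 12063818025*t
    + 11024679960*t^2 + 1860693660*t^3 + 134647380*t^4 + 3367980*t^5
    - 115920*t^6 - 9684*t^7 - 234*t^8 - 2*t^9

noncomputable def D₂ (t : ℝ) : ℝ :=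
  6428310336000*(22 + 3*t)*Real.exp t + 12063818025 + 22049359920*t
    + 5582080980*t^2 + 538589520*t^3 + 16839900*t^4 - 695520*t^5
    - 67788*t^6 - 1872*t^7 - 18*t^8

lemma hasDerivAt_θ₂ (t : ℝ) : HasDerivAt θ₂ (D₂ t) t := by
  have m : ∀ (n : ℕ) (c : ℝ), HasDerivAt (fun x : ℝ => c * x ^ n)
      (c * (n * t ^ (n - 1))) t := fun n c => (hasDerivAt_pow n t).const_mul c
  have h1 : HasDerivAt (fun x : ℝ => (19 : ℝ) + 3 * x) 3 t := by
    simpa using ((hasDerivAt_id t).const_mul (3:ℝ)).const_add (19:ℝ)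
  have h2 := (h1.mul (Real.hasDerivAt_exp t)).const_mul (6428310336000 : ℝ)
  have h4 := (((((((((h2.sub_const 87648575175).add (m 1 12063818025)).add
    (m 2 11024679960)).add (m 3 1860693660)).add (m 4 134647380)).add
    (m 5 3367980)).sub (m 6 115920)).sub (m 7 9684)).sub (m 8 234)).sub (m 9 2)
  have hfun : θ₂ = (fun x : ℝ =>
      6428310336000 * ((19 + 3 * x) * Real.exp x) - 87648575175 + 12063818025 * x ^ 1
        + 11024679960 * x ^ 2 + 1860693660 * x ^ 3 + 134647380 * x ^ 4 + 3367980 * x ^ 5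
        - 115920 * x ^ 6 - 9684 * x ^ 7 - 234 * x ^ 8 - 2 * x ^ 9) := by
    funext x; simp [θ₂]; ring
  rw [hfun]
  refine h4.congr_deriv ?_
  simp [D₂]
  ring

lemma pow8_le_exp (t : ℝ) (ht : 0 ≤ t) : (t/8)^8 ≤ Real.exp t := by
  have h1 : t/8 ≤ Real.exp (t/8) := by
    have := Real.add_one_le_exp (t/8); linarith
  have h2 : (t/8)^8 ≤ (Real.exp (t/8))^8 :=
    pow_le_pow_left₀ (by positivity) h1 8
  have h3 : (Real.exp (t/8))^8 = Real.exp t := by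
    rw [← Real.exp_nat_mul]; congr 1; push_cast; ring
  linarith [h2, h3.le, h3.ge]

lemma D₂_pos (t : ℝ) (ht : 0 < t) : 0 < D₂ t := by
  have he1 : (1 : ℝ) ≤ Real.exp t := Real.one_le_exp ht.le
  have he8 : (t/8)^8 ≤ Real.exp t := pow8_le_exp t ht.le
  unfold D₂
  rcases le_or_gt t 1 with h | h
  · nlinarith [pow_le_one₀ ht.le h (n := 5), pow_le_one₀ ht.le h (n := 6),
      pow_le_one₀ ht.le h (n := 7), pow_le_one₀ ht.le h (n := 8),
      pow_nonneg ht.le 2, pow_nonneg ht.le 3, pow_nonneg ht.le 4]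
  · have h5 : t^5 ≤ t^8 := pow_le_pow_right₀ h.le (by norm_num)
    have h6 : t^6 ≤ t^8 := pow_le_pow_right₀ h.le (by norm_num)
    have h7 : t^7 ≤ t^8 := pow_le_pow_right₀ h.le (by norm_num)
    have hp : (0:ℝ) < t^8 := by positivity
    nlinarith [mul_le_mul_of_nonneg_left he8 (by norm_num : (0:ℝ) ≤ 6428310336000*22),
      pow_nonneg ht.le 2, pow_nonneg ht.le 3, pow_nonneg ht.le 4]

theorem stmt10 : (∀ t : ℝ, 0 < t → 0 < θ₂ t) ∧ StrictMonoOn θ₂ (Set.Ioi 0) := by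
  have hmono : StrictMonoOn θ₂ (Set.Ici 0) := by
    apply strictMonoOn_of_deriv_pos (convex_Ici 0)
    · exact fun x _ => (hasDerivAt_θ₂ x).differentiableAt.continuousAt.continuousWithinAt
    · intro x hx
      rw [interior_Ici] at hx
      rw [(hasDerivAt_θ₂ x).deriv]
      exact D₂_pos x hx
  refine ⟨fun t ht => ?_, hmono.mono Set.Ioi_subset_Ici_self⟩
  have h0 : θ₂ 0 < θ₂ t := hmono (Set.self_mem_Ici) (Set.mem_Ici.2 ht.le) ht
  have h1 : 0 < θ₂ 0 := by norm_num [θ₂, Real.exp_zero]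
  linarith
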